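/- Let p ≥ 5 be a prime and let A be a valid multiset contained in (Z/pZ)^2 with |A| = p + 1. Then #ΣA ≥ 3p. -/

import Mathlib

/-- The sumset ΣA of a multiset A: all sums of submultisets of A (including the empty sum 0). -/
def sumset {G : Type*} [AddCommMonoid G] (A : Multiset G) : Set G :=
  {x | ∃ B ≤ A, B.sum = x}

open scoped Classical in
/-- The number of elements of the multiset A (with multiplicity) lying in the subgroup H. -/
noncomputable def inCount {G : Type*} [AddCommGroup G] (A : Multiset G) (H : AddSubgroup G) : ℕ :=
  Multiset.card (A.filter (fun x => x ∈ H))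

/-- A multiset in (Z/pZ)² is valid if 0 ∉ A and every nontrivial (cyclic) subgroup contains
fewer than p elements of A, counted with multiplicity. -/
def ValidMS (p : ℕ) (A : Multiset (ZMod p × ZMod p)) : Prop :=
  (0 : ZMod p × ZMod p) ∉ A ∧
    ∀ x : ZMod p × ZMod p, x ≠ 0 → inCount A (AddSubgroup.zmultiples x) < p

namespace SS
open Multiset

variable {G : Type*} [AddCommGroup G]

theorem zero_mem_sumset (A : Multiset G) : (0:G) ∈ sumset A := ⟨0, Multiset.zero_le A, rfl⟩

theorem sumset_mono {A B : Multiset G} (h : A ≤ B) : sumset A ⊆ sumset B := by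
  rintro x ⟨C, hC, rfl⟩; exact ⟨C, hC.trans h, rfl⟩

theorem sumset_zero : sumset (0 : Multiset G) = {(0:G)} := by
  ext x; constructor
  · rintro ⟨B, hB, rfl⟩
    have : B = 0 := Multiset.le_zero.mp hB
    simp [this]
  · rintro rfl; exact zero_mem_sumset 0

theorem sumset_cons (a : G) (M : Multiset G) :
    sumset (a ::ₘ M) = sumset M ∪ (a + ·) '' (sumset M) := by
  classical
  ext x; constructor
  · rintro ⟨B, hB, rfl⟩
    by_cases ha : a ∈ B
    · right
      refine ⟨(B.erase a).sum, ⟨B.erase a, ?_, rfl⟩, ?_⟩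
      · rw [← Multiset.cons_erase ha] at hB
        exact (Multiset.cons_le_cons_iff a).1 hB
      · show a + (B.erase a).sum = B.sum
        rw [← Multiset.sum_cons, Multiset.cons_erase ha]
    · left; exact ⟨B, (Multiset.le_cons_of_notMem ha).1 hB, rfl⟩
  · rintro (⟨B, hB, rfl⟩ | ⟨y, ⟨B, hB, rfl⟩, rfl⟩)
    · exact ⟨B, hB.trans (Multiset.le_cons_self M a), rfl⟩
    · exact ⟨a ::ₘ B, Multiset.cons_le_cons a hB, by simp⟩

theorem ord_eq_p {p : ℕ} (hp : p.Prime) {x : G} (hx : x ≠ 0) (hpx : p • x = 0) :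
    addOrderOf x = p := by
  have h1 : addOrderOf x ∣ p := addOrderOf_dvd_of_nsmul_eq_zero hpx
  rcases (Nat.Prime.eq_one_or_self_of_dvd hp _ h1) with h | h
  · exact absurd (AddMonoid.addOrderOf_eq_one_iff.mp h) hx
  · exact h

theorem grow {p : ℕ} (hp : p.Prime) [DecidableEq G] (S : Finset G) (hS : S.Nonempty) (x : G)
    (hx : addOrderOf x = p) :
    min p (S.card + 1) ≤ (S ∪ S.image (x + ·)).card := by
  by_cases h : S ∪ S.image (x + ·) = S
  · have himg : S.image (x + ·) = S := by
      apply Finset.eq_of_subset_of_card_le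
      · intro y hy; rw [← h]; exact Finset.mem_union_right _ hy
      · rw [Finset.card_image_of_injective _ (add_right_injective x)]
    obtain ⟨s₀, hs₀⟩ := hS
    have key : ∀ n : ℕ, s₀ + n • x ∈ S := by
      intro n; induction n with
      | zero => simpa using hs₀
      | succ n ih =>
          have h2 : x + (s₀ + n • x) ∈ S.image (x + ·) := Finset.mem_image_of_mem _ ih
          rw [himg] at h2
          have : s₀ + (n+1) • x = x + (s₀ + n • x) := by
            rw [succ_nsmul]; abel
          rwa [this]
    have hinj : ∀ i j : Fin p, (i:ℕ) • x = (j:ℕ) • x → i = j := by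
      have main : ∀ i j : Fin p, (i:ℕ) ≤ (j:ℕ) → (i:ℕ) • x = (j:ℕ) • x → i = j := by
        intro i j hle hij
        have h3 : ((j:ℕ) - (i:ℕ)) • x = 0 := by
          have h4 : ((j:ℕ) - (i:ℕ)) • x + (i:ℕ) • x = (j:ℕ) • x := by
            rw [← add_nsmul, Nat.sub_add_cancel hle]
          rw [← hij] at h4
          exact add_right_cancel (h4.trans (zero_add ((i:ℕ) • x)).symm)
        have h5 : p ∣ (j:ℕ) - (i:ℕ) := by
          have := addOrderOf_dvd_of_nsmul_eq_zero h3
          rwa [hx] at this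
        have h6 : (j:ℕ) - (i:ℕ) < p := lt_of_le_of_lt (Nat.sub_le _ _) j.isLt
        have h7 : (j:ℕ) - (i:ℕ) = 0 := by
          by_contra h7
          exact absurd (Nat.le_of_dvd (Nat.pos_of_ne_zero h7) h5) (not_le.mpr h6)
        exact Fin.ext (by omega)
      intro i j hij
      rcases le_total (i:ℕ) (j:ℕ) with hle | hle
      · exact main i j hle hij
      · exact (main j i hle hij.symm).symm
    have hcard : p ≤ S.card := by
      have : (Finset.univ : Finset (Fin p)).card ≤ S.card := by
        apply Finset.card_le_card_of_injOn (fun n : Fin p => s₀ + (n:ℕ) • x)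
        · intro n _; exact key n
        · intro i _ j _ hij
          exact hinj i j (by simpa [add_right_inj] using hij)
      simpa using this
    rw [h]
    exact le_trans (min_le_left _ _) hcard
  · have hsub : S ⊆ S ∪ S.image (x + ·) := Finset.subset_union_left
    have : S.card < (S ∪ S.image (x + ·)).card :=
      Finset.card_lt_card (Finset.ssubset_iff_subset_ne.mpr ⟨hsub, fun he => h he.symm⟩)
    exact le_trans (min_le_right _ _) this

end SS

section Part2
open Multiset SS

variable {G : Type*} [AddCommGroup G] [Fintype G] [DecidableEq G]

noncomputable def SF (M : Multiset G) : Finset G := (Set.toFinite (sumset M)).toFinset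

theorem mem_SF {M : Multiset G} {x : G} : x ∈ SF M ↔ x ∈ sumset M := Set.Finite.mem_toFinset _

theorem zero_mem_SF (M : Multiset G) : (0:G) ∈ SF M := mem_SF.mpr (zero_mem_sumset M)

theorem SF_card_eq (M : Multiset G) : (sumset M).ncard = (SF M).card :=
  Set.ncard_eq_toFinset_card _ _

theorem SF_cons (a : G) (M : Multiset G) : SF (a ::ₘ M) = SF M ∪ (SF M).image (a + ·) := by
  ext x
  simp only [mem_SF, sumset_cons, Set.mem_union, Set.mem_image, Finset.mem_union,
    Finset.mem_image]

theorem chain {p : ℕ} (hp : p.Prime) {K : Type*} [AddCommGroup K] [DecidableEq K]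
    (φ : G →+ K) (N R : Multiset G) (hR : ∀ b ∈ R, addOrderOf (φ b) = p) :
    min p (((SF N).image φ).card + Multiset.card R) ≤ ((SF (N + R)).image φ).card := by
  induction R using Multiset.induction_on with
  | empty => simpa using min_le_right _ _
  | cons a R ih =>
    rw [Multiset.add_cons, SF_cons]
    have himg : ((SF (N+R) ∪ (SF (N+R)).image (a + ·)).image φ)
        = ((SF (N+R)).image φ) ∪ ((SF (N+R)).image φ).image (φ a + ·) := by
      rw [Finset.image_union, Finset.image_image, Finset.image_image]
      congr 1
      ext y
      simp only [Finset.mem_image, Function.comp_apply]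
      constructor
      · rintro ⟨v, hv, rfl⟩; exact ⟨v, hv, (map_add φ a v).symm⟩
      · rintro ⟨v, hv, rfl⟩; exact ⟨v, hv, map_add φ a v⟩
    rw [himg]
    have hne : ((SF (N+R)).image φ).Nonempty := ⟨φ 0, Finset.mem_image_of_mem _ (zero_mem_SF _)⟩
    have hgrow := grow hp ((SF (N+R)).image φ) hne (φ a) (hR a (Multiset.mem_cons_self a R))
    have hih := ih (fun b hb => hR b (Multiset.mem_cons_of_mem hb))
    simp only [Multiset.card_cons]
    omega

theorem chain0 {p : ℕ} (hp : p.Prime) {K : Type*} [AddCommGroup K] [DecidableEq K]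
    (φ : G →+ K) (R : Multiset G) (hR : ∀ b ∈ R, addOrderOf (φ b) = p) :
    min p (Multiset.card R + 1) ≤ ((SF R).image φ).card := by
  have := chain hp φ 0 R hR
  rw [zero_add] at this
  have h0 : ((SF (0 : Multiset G)).image φ).card = 1 := by
    have : SF (0 : Multiset G) = {0} := by
      ext x; simp [mem_SF, sumset_zero]
    rw [this]
    simp
  rw [h0] at this
  omega

end Part2

section Part3
open Multiset SS AddSubgroup

variable {p : ℕ} [Fact p.Prime]

abbrev Gp (p : ℕ) := ZMod p × ZMod p

theorem psmul_zero_G (z : Gp p) : p • z = 0 := by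
  have h1 : (p : ZMod p) = 0 := ZMod.natCast_self p
  ext <;> simp [nsmul_eq_mul, h1]

theorem psmul_zero_Z (t : ZMod p) : p • t = 0 := by
  have h1 : (p : ZMod p) = 0 := ZMod.natCast_self p
  simp [nsmul_eq_mul, h1]

theorem ordG {z : Gp p} (hz : z ≠ 0) : addOrderOf z = p :=
  ord_eq_p (Fact.out) hz (psmul_zero_G z)

theorem ordZ {t : ZMod p} (ht : t ≠ 0) : addOrderOf t = p :=
  ord_eq_p (Fact.out) ht (psmul_zero_Z t)

/-- the linear functional with kernel the line through x -/
noncomputable def lf (x : Gp p) : Gp p →+ ZMod p :=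
  AddMonoidHom.mk' (fun z => x.1 * z.2 - x.2 * z.1) (by intro a b; simp; ring)

theorem lf_apply (x z : Gp p) : lf x z = x.1 * z.2 - x.2 * z.1 := rfl

theorem zsmul_val (c : ZMod p) (x : Gp p) :
    ((c.val : ℤ)) • x = (c * x.1, c * x.2) := by
  have : ((c.val : ℤ) : ZMod p) = c := by
    push_cast
    exact ZMod.natCast_val c |>.trans (ZMod.cast_id' ▸ rfl)
  ext
  · show (c.val : ℤ) • x.1 = c * x.1
    rw [zsmul_eq_mul, this]
  · show (c.val : ℤ) • x.2 = c * x.2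
    rw [zsmul_eq_mul, this]

theorem lf_zero_iff {x : Gp p} (hx : x ≠ 0) (z : Gp p) :
    lf x z = 0 ↔ z ∈ zmultiples x := by
  constructor
  · intro h
    rw [lf_apply, sub_eq_zero] at h
    by_cases h1 : x.1 = 0
    · have h2 : x.2 ≠ 0 := by
        intro h2; exact hx (Prod.ext h1 h2)
      have hz1 : z.1 = 0 := by
        rw [h1, zero_mul] at h
        exact (mul_eq_zero.mp h.symm).resolve_left h2
      refine ⟨((x.2⁻¹ * z.2 : ZMod p).val : ℤ), ?_⟩
      show ((x.2⁻¹ * z.2 : ZMod p).val : ℤ) • x = z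
      rw [zsmul_val]
      ext
      · show x.2⁻¹ * z.2 * x.1 = z.1
        rw [h1, hz1, mul_zero]
      · show x.2⁻¹ * z.2 * x.2 = z.2
        field_simp
    · refine ⟨((x.1⁻¹ * z.1 : ZMod p).val : ℤ), ?_⟩
      show ((x.1⁻¹ * z.1 : ZMod p).val : ℤ) • x = z
      rw [zsmul_val]
      ext
      · show x.1⁻¹ * z.1 * x.1 = z.1
        field_simp
      · show x.1⁻¹ * z.1 * x.2 = z.2
        have : x.1 * z.2 = x.2 * z.1 := h
        field_simp
        rw [mul_comm z.1 x.2, ← this]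
  · rintro ⟨k, rfl⟩
    have : lf x x = 0 := by rw [lf_apply]; ring
    calc lf x (k • x) = k • lf x x := by rw [map_zsmul]
    _ = 0 := by rw [this]; simp

end Part3

section Part4
open Multiset SS AddSubgroup

open scoped Classical

theorem inCount_eq {G : Type*} [AddCommGroup G] (A : Multiset G) (H : AddSubgroup G) :
    inCount A H = Multiset.card (A.filter (fun x => x ∈ H)) := rfl

variable {p : ℕ} [Fact p.Prime] [NeZero p]

theorem fiber_sum (A : Multiset (Gp p)) (φ : Gp p →+ ZMod p) :
    (SF A).card = ∑ c : ZMod p, ((SF A).filter (fun v => φ v = c)).card :=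
  Finset.card_eq_sum_card_fiberwise (fun x _ => Finset.mem_univ (φ x))

theorem fiber_bound {A B' : Multiset (Gp p)} {a₁ : Gp p}
    (hle : a₁ ::ₘ B' ≤ A) (ha₁ : a₁ ≠ 0) {φ : Gp p →+ ZMod p} (hφa : φ a₁ = 0)
    (c : ZMod p) (W : Finset (Gp p)) (hWne : W.Nonempty)
    (hW : ∀ v ∈ W, v ∈ sumset B' ∧ φ v = c) :
    min p (W.card + 1) ≤ ((SF A).filter (fun v => φ v = c)).card := by
  have hord : addOrderOf a₁ = p := ordG ha₁
  have hgrow := grow (p := p) Fact.out W hWne a₁ hord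
  refine hgrow.trans (Finset.card_le_card ?_)
  intro y hy
  rw [Finset.mem_union] at hy
  rcases hy with hy | hy
  · obtain ⟨hv, hc⟩ := hW y hy
    exact Finset.mem_filter.mpr
      ⟨mem_SF.mpr (sumset_mono (le_trans (Multiset.le_cons_self B' a₁) hle) hv), hc⟩
  · obtain ⟨v, hv, rfl⟩ := Finset.mem_image.mp hy
    obtain ⟨⟨T, hT, rfl⟩, hc⟩ := hW v hv
    refine Finset.mem_filter.mpr ⟨mem_SF.mpr ⟨a₁ ::ₘ T, le_trans (Multiset.cons_le_cons a₁ hT) hle, by simp⟩, ?_⟩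
    show φ (a₁ + T.sum) = c
    rw [AddMonoidHom.map_add, hφa, hc, zero_add]

theorem fiber_bound2 {A AL B : Multiset (Gp p)} (hle : AL + B ≤ A)
    {φ : Gp p →+ ZMod p} (hker : ∀ u ∈ AL, φ u = 0)
    {c : ZMod p} {v : Gp p} (hv : v ∈ sumset B) (hφv : φ v = c) :
    (SF AL).card ≤ ((SF A).filter (fun y => φ y = c)).card := by
  apply Finset.card_le_card_of_injOn (fun u => v + u)
  · intro u hu
    rw [Finset.mem_coe, mem_SF] at hu
    obtain ⟨T, hT, rfl⟩ := hu
    obtain ⟨T', hT', rfl⟩ := hv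
    refine Finset.mem_filter.mpr ⟨mem_SF.mpr ⟨T + T', le_trans (add_le_add hT hT') hle, ?_⟩, ?_⟩
    · rw [Multiset.sum_add]; abel
    · show φ (T'.sum + T.sum) = c
      rw [AddMonoidHom.map_add, hφv]
      have : φ T.sum = 0 := by
        rw [map_multiset_sum]
        apply Multiset.sum_eq_zero
        intro z hz
        obtain ⟨u, hu, rfl⟩ := Multiset.mem_map.mp hz
        exact hker u (Multiset.mem_of_le hT hu)
      rw [this, add_zero]
  · intro a _ b _ h
    exact add_left_cancel h

theorem arith1 {p m k : ℕ} (hp5 : 5 ≤ p) (hm2 : 2 ≤ m) (hmk : m + k = p + 1) (hmp : m < p) :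
    3 * p ≤ min p (k + 1) * min p (m + 1) := by
  have hm1 : min p (m+1) = m+1 := by omega
  rw [hm1]
  rcases le_or_gt p (k+1) with h | h
  · rw [min_eq_left h]; nlinarith
  · rw [min_eq_right (by omega)]
    have hk2 : 2 ≤ k := by omega
    zify
    nlinarith [mul_nonneg (by omega : (0:ℤ) ≤ (k:ℤ) - 2) (by omega : (0:ℤ) ≤ (m:ℤ) - 2)]

theorem case_m2 (hp5 : 5 ≤ p) (A : Multiset (Gp p))
    (hA : ValidMS p A) (hcard : Multiset.card A = p + 1)
    (x : Gp p) (hx : x ≠ 0) (hm2 : 2 ≤ inCount A (zmultiples x)) :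
    3 * p ≤ (SF A).card := by
  set L := zmultiples x with hL
  set AL := A.filter (fun z => z ∈ L) with hAL
  set B := A.filter (fun z => ¬ z ∈ L) with hB
  have hALB : AL + B = A := Multiset.filter_add_not _ A
  set m := Multiset.card AL with hm
  set k := Multiset.card B with hk
  have hmk : m + k = p + 1 := by
    rw [hm, hk, ← Multiset.card_add, hALB, hcard]
  have hmc : inCount A L = m := rfl
  have hmp : m < p := hmc ▸ hA.2 x hx
  have hm2' : 2 ≤ m := hmc ▸ hm2
  set φ := lf x with hφ
  have hφB : ∀ b ∈ B, φ b ≠ 0 := by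
    intro b hb
    have := Multiset.of_mem_filter hb
    intro h0
    exact this ((lf_zero_iff hx b).mp h0)
  have hφL : ∀ u ∈ AL, φ u = 0 := by
    intro u hu
    exact (lf_zero_iff hx u).mpr (Multiset.of_mem_filter hu)
  -- inner bound
  have hALne : ∀ u ∈ AL, u ≠ 0 := fun u hu h0 =>
    hA.1 (h0 ▸ Multiset.mem_of_mem_filter hu)
  have hinner : min p (m + 1) ≤ (SF AL).card := by
    have := chain0 (p := p) Fact.out (AddMonoidHom.id (Gp p)) AL
      (fun b hb => ordG (hALne b hb))
    have himid : Finset.image (⇑(AddMonoidHom.id (Gp p))) (SF AL) = SF AL := by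
      apply Finset.image_id'
    rw [himid, ← hm] at this
    omega
  -- coverage
  have hcover : min p (k + 1) ≤ ((SF B).image φ).card := by
    have := chain0 (p := p) Fact.out φ B (fun b hb => ordZ (hφB b hb))
    rw [← hk] at this
    omega
  -- combine
  rw [fiber_sum A φ]
  have hQ : ∀ c ∈ (SF B).image φ, min p (m+1) ≤ ((SF A).filter (fun v => φ v = c)).card := by
    intro c hc
    obtain ⟨v, hv, rfl⟩ := Finset.mem_image.mp hc
    exact le_trans hinner (fiber_bound2 (le_of_eq hALB) hφL (mem_SF.mp hv) rfl)
  calc 3 * p ≤ min p (k+1) * min p (m+1) := arith1 hp5 hm2' hmk hmp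
  _ ≤ ((SF B).image φ).card * min p (m+1) := Nat.mul_le_mul_right _ hcover
  _ ≤ ∑ c ∈ (SF B).image φ, ((SF A).filter (fun v => φ v = c)).card := by
      calc ((SF B).image φ).card * min p (m+1)
          = ((SF B).image φ).card • (min p (m+1)) := rfl
        _ ≤ _ := Finset.card_nsmul_le_sum _ _ _ hQ
  _ ≤ ∑ c : ZMod p, ((SF A).filter (fun v => φ v = c)).card :=
      Finset.sum_le_sum_of_subset (Finset.subset_univ _)

end Part4

section Part5
open Multiset SS AddSubgroup

open scoped Classical

variable {p : ℕ} [Fact p.Prime] [NeZero p]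

theorem mem_zmul_self (a : Gp p) : a ∈ zmultiples a := ⟨1, one_zsmul a⟩

theorem image_univ_of_card {Q : Finset (ZMod p)} (h : p ≤ Q.card) : Q = Finset.univ := by
  apply Finset.eq_univ_of_card
  have h2 := Finset.card_le_univ Q
  rw [ZMod.card] at h2
  rw [ZMod.card]
  omega

theorem dup_extract {M : Multiset (Gp p)} (φ : Gp p →+ ZMod p)
    (hcnt : ∀ a, Multiset.count a M ≤ 1) (h : ¬ (M.map φ).Nodup) :
    ∃ b b', b ::ₘ {b'} ≤ M ∧ b ≠ b' ∧ φ b = φ b' := by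
  rw [Multiset.nodup_iff_count_le_one] at h
  push_neg at h
  obtain ⟨t, ht⟩ := h
  rw [Multiset.count_map] at ht
  set C := M.filter (fun b => t = φ b) with hC
  have hC2 : 2 ≤ Multiset.card C := ht
  obtain ⟨b, hbC⟩ := Multiset.card_pos_iff_exists_mem.mp (lt_of_lt_of_le (by norm_num) hC2)
  have h1 : 0 < Multiset.card (C.erase b) := by
    rw [Multiset.card_erase_of_mem hbC, Nat.pred_eq_sub_one]; omega
  obtain ⟨b', hb'⟩ := Multiset.card_pos_iff_exists_mem.mp h1
  have hle : b ::ₘ {b'} ≤ M := by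
    calc b ::ₘ {b'} ≤ b ::ₘ C.erase b :=
          Multiset.cons_le_cons b (Multiset.singleton_le.mpr hb')
    _ = C := Multiset.cons_erase hbC
    _ ≤ M := Multiset.filter_le _ M
  have hbb' : b ≠ b' := by
    intro he
    have h2 : Multiset.count b (b ::ₘ {b'}) ≤ Multiset.count b M :=
      Multiset.count_le_of_le b hle
    rw [← he] at h2
    simp [Multiset.count_cons] at h2
    exact absurd (le_trans h2 (hcnt b)) (by omega)
  refine ⟨b, b', hle, hbb', ?_⟩
  rw [hC] at hbC
  have e1 : t = φ b := (Multiset.mem_filter.mp hbC).2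
  have hb'C : b' ∈ C := Multiset.mem_of_mem_erase hb'
  rw [hC] at hb'C
  have e2 : t = φ b' := (Multiset.mem_filter.mp hb'C).2
  rw [← e1, ← e2]

theorem map_not_nodup {M : Multiset (Gp p)} (φ : Gp p →+ ZMod p) (hM : Multiset.card M = p)
    (h0 : ∀ b ∈ M, φ b ≠ 0) : ¬ (M.map φ).Nodup := by
  intro hnd
  have h1 : (M.map φ).toFinset.card = p := by
    rw [Multiset.toFinset_card_of_nodup hnd, Multiset.card_map, hM]
  have h2 : (M.map φ).toFinset ⊆ Finset.univ.erase 0 := by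
    intro t ht
    rw [Finset.mem_erase]
    refine ⟨?_, Finset.mem_univ _⟩
    obtain ⟨u, hu, rfl⟩ := Multiset.mem_map.mp (Multiset.mem_toFinset.mp ht)
    exact h0 u hu
  have h3 := Finset.card_le_card h2
  rw [h1, Finset.card_erase_of_mem (Finset.mem_univ 0), Finset.card_univ, ZMod.card] at h3
  have hp0 : p ≠ 0 := NeZero.ne p
  omega

theorem two_in_line {A : Multiset (Gp p)}
    (hm1 : ∀ x : Gp p, x ≠ 0 → inCount A (zmultiples x) ≤ 1)
    {x : Gp p} (hx : x ≠ 0) {b b' : Gp p} (hle : b ::ₘ {b'} ≤ A)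
    (hb : b ∈ zmultiples x) (hb' : b' ∈ zmultiples x) : False := by
  have h2 : 2 ≤ inCount A (zmultiples x) := by
    rw [inCount_eq]
    have hsub : b ::ₘ {b'} ≤ A.filter (fun z => z ∈ zmultiples x) := by
      rw [Multiset.le_filter]
      refine ⟨hle, ?_⟩
      intro z hz
      rcases Multiset.mem_cons.mp hz with rfl | hz
      · exact hb
      · rw [Multiset.mem_singleton.mp hz]; exact hb'
    have := Multiset.card_le_card hsub
    simpa using this
  have := hm1 x hx
  omega

theorem card_three {a b c : Gp p} (hab : a ≠ b) (hac : a ≠ c) (hbc : b ≠ c) :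
    ({a, b, c} : Finset (Gp p)).card = 3 := by
  rw [Finset.card_insert_of_notMem (by simp [hab, hac]),
     Finset.card_insert_of_notMem (by simp [hbc]), Finset.card_singleton]

theorem pair_split {x y : Gp p} {M : Multiset (Gp p)} (h : x ::ₘ {y} ≤ M) (hxy : x ≠ y) :
    x ::ₘ y ::ₘ ((M.erase x).erase y) = M := by
  have hyx : y ∈ M.erase x := by
    have h2 := Multiset.count_le_of_le y h
    have h3 : Multiset.count y (x ::ₘ {y}) = 1 := by
      simp [Multiset.count_cons, Multiset.count_singleton, Ne.symm hxy]
    rw [h3] at h2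
    exact Multiset.count_pos.mp (by rw [Multiset.count_erase_of_ne (Ne.symm hxy)]; omega)
  have hxM : x ∈ M := by
    have h2 := Multiset.count_le_of_le x h
    have h3 : 1 ≤ Multiset.count x (x ::ₘ {y}) := by
      simp [Multiset.count_cons]
    exact Multiset.count_pos.mp (by omega)
  rw [Multiset.cons_erase hyx, Multiset.cons_erase hxM]

theorem le_cons_pair₁ {a a' : Gp p} {T M : Multiset (Gp p)} (h : T ≤ M) :
    a ::ₘ T ≤ a ::ₘ a' ::ₘ M :=
  Multiset.cons_le_cons a (h.trans (Multiset.le_cons_self M a'))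

theorem le_cons_pair₂ {a a' : Gp p} {T M : Multiset (Gp p)} (h : T ≤ M) :
    a' ::ₘ T ≤ a ::ₘ a' ::ₘ M := by
  rw [Multiset.cons_swap]
  exact Multiset.cons_le_cons a' (h.trans (Multiset.le_cons_self M a))

theorem case_m1 (hp5 : 5 ≤ p) (A : Multiset (Gp p))
    (hA : ValidMS p A) (hcard : Multiset.card A = p + 1)
    (hm1 : ∀ x : Gp p, x ≠ 0 → inCount A (zmultiples x) ≤ 1) :
    3 * p ≤ (SF A).card := by
  -- pick a₁
  obtain ⟨a₁, ha₁A⟩ := Multiset.card_pos_iff_exists_mem.mp (by omega : 0 < Multiset.card A)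
  set B := A.erase a₁ with hBdef
  have hAB : a₁ ::ₘ B = A := Multiset.cons_erase ha₁A
  have hcardB : Multiset.card B = p := by
    have := congrArg Multiset.card hAB
    rw [Multiset.card_cons, hcard] at this
    omega
  have hmemA : ∀ z ∈ A, z ≠ 0 := fun z hz h0 => hA.1 (h0 ▸ hz)
  have ha₁ : a₁ ≠ 0 := hmemA a₁ ha₁A
  set φ := lf a₁ with hφdef
  have hφa : φ a₁ = 0 := (lf_zero_iff ha₁ a₁).mpr (mem_zmul_self a₁)
  have hφB : ∀ b ∈ B, φ b ≠ 0 := by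
    intro b hb h0
    have hbz : b ∈ zmultiples a₁ := (lf_zero_iff ha₁ b).mp h0
    have hle : a₁ ::ₘ {b} ≤ A := by
      rw [← hAB]
      exact Multiset.cons_le_cons a₁ (Multiset.singleton_le.mpr hb)
    exact two_in_line hm1 ha₁ hle (mem_zmul_self a₁) hbz
  have hcnt : ∀ a, Multiset.count a A ≤ 1 := by
    intro a
    by_contra hc
    push_neg at hc
    have haA : a ∈ A := Multiset.count_pos.mp (by omega)
    have ha0 : a ≠ 0 := hmemA a haA
    have hrep : Multiset.replicate 2 a ≤ A := Multiset.le_iff_count.mpr (by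
      intro x
      by_cases hxa : x = a
      · subst hxa; simp [Multiset.count_replicate]; omega
      · simp [Multiset.count_replicate, hxa])
    have : a ::ₘ {a} ≤ A := by simpa [Multiset.replicate_succ] using hrep
    exact two_in_line hm1 ha0 this (mem_zmul_self a) (mem_zmul_self a)
  have hcntB : ∀ a, Multiset.count a B ≤ 1 :=
    fun a => le_trans (Multiset.count_le_of_le a (Multiset.erase_le a₁ A)) (hcnt a)
  -- pigeonhole pair in B
  obtain ⟨b, b', hbb'le, hbb', hφbb'⟩ := dup_extract φ hcntB (map_not_nodup φ hcardB hφB)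
  set D := (B.erase b).erase b' with hDdef
  have hBD : b ::ₘ b' ::ₘ D = B := pair_split hbb'le hbb'
  have hcardD : Multiset.card D = p - 2 := by
    have := congrArg Multiset.card hBD
    simp only [Multiset.card_cons] at this
    omega
  have hφD : ∀ z ∈ D, φ z ≠ 0 := by
    intro z hz
    apply hφB
    rw [← hBD]
    exact Multiset.mem_cons_of_mem (Multiset.mem_cons_of_mem hz)
  -- coverage of B : all fibers hit
  have hcovB : ((SF B).image φ) = Finset.univ := by
    apply image_univ_of_card
    have := chain0 (p := p) Fact.out φ B (fun z hz => ordZ (hφB z hz))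
    rw [hcardB] at this
    omega
  have hbase : ∀ c : ZMod p, ∃ v, v ∈ sumset B ∧ φ v = c := by
    intro c
    have : c ∈ (SF B).image φ := by rw [hcovB]; exact Finset.mem_univ c
    obtain ⟨v, hv, rfl⟩ := Finset.mem_image.mp this
    exact ⟨v, mem_SF.mp hv, rfl⟩
  have hleBA : a₁ ::ₘ B ≤ A := le_of_eq hAB
  have hp0 : p ≠ 0 := NeZero.ne p
  -- count sums
  rw [fiber_sum A φ]
  -- case split on D
  by_cases hnd : (D.map φ).Nodup
  · -- case (i): find u,w,r in D with pairwise distinct nonzero φ values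
    obtain ⟨u, hu⟩ := Multiset.card_pos_iff_exists_mem.mp (by omega : 0 < Multiset.card D)
    set D1 := D.erase u with hD1
    have hD1D : u ::ₘ D1 = D := Multiset.cons_erase hu
    have hcardD1 : Multiset.card D1 = p - 3 := by
      have := congrArg Multiset.card hD1D; simp only [Multiset.card_cons] at this; omega
    obtain ⟨w, hw⟩ := Multiset.card_pos_iff_exists_mem.mp (by omega : 0 < Multiset.card D1)
    set D2 := D1.erase w with hD2
    have hD2D : w ::ₘ D2 = D1 := Multiset.cons_erase hw
    have hcardD2 : Multiset.card D2 = p - 4 := by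
      have := congrArg Multiset.card hD2D; simp only [Multiset.card_cons] at this; omega
    obtain ⟨r, hr⟩ := Multiset.card_pos_iff_exists_mem.mp (by omega : 0 < Multiset.card D2)
    have hform : u ::ₘ w ::ₘ D2 = D := by rw [hD2D, hD1D]
    have hnd2 : ¬ φ u = φ w ∧ ¬ φ u = φ r ∧ ¬ φ w = φ r := by
      rw [← hform] at hnd
      rw [Multiset.map_cons, Multiset.map_cons, Multiset.nodup_cons, Multiset.nodup_cons] at hnd
      obtain ⟨h1, h2, _⟩ := hnd
      refine ⟨?_, ?_, ?_⟩
      · intro he; exact h1 (by rw [he]; exact Multiset.mem_cons_self _ _)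
      · intro he; exact h1 (by
          rw [he]
          exact Multiset.mem_cons_of_mem (Multiset.mem_map_of_mem φ hr))
      · intro he; exact h2 (by rw [he]; exact Multiset.mem_map_of_mem φ hr)
    -- choose pair s s' from D
    have hpair : ∃ s s', s ::ₘ {s'} ≤ D ∧ φ s ≠ φ s' ∧ φ s + φ s' ≠ 0 := by
      have hle_uw : u ::ₘ {w} ≤ D := by
        rw [← hform]
        exact Multiset.cons_le_cons u (Multiset.singleton_le.mpr (Multiset.mem_cons_self w D2))
      have hle_ur : u ::ₘ {r} ≤ D := by
        rw [← hform]
        exact Multiset.cons_le_cons u (Multiset.singleton_le.mpr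
          (Multiset.mem_cons_of_mem hr))
      have hle_wr : w ::ₘ {r} ≤ D := by
        rw [← hform]
        calc w ::ₘ {r} ≤ w ::ₘ D2 := Multiset.cons_le_cons w (Multiset.singleton_le.mpr hr)
        _ ≤ u ::ₘ w ::ₘ D2 := Multiset.le_cons_self _ u
      by_cases h1 : φ u + φ w ≠ 0
      · exact ⟨u, w, hle_uw, hnd2.1, h1⟩
      · by_cases h2 : φ u + φ r ≠ 0
        · exact ⟨u, r, hle_ur, hnd2.2.1, h2⟩
        · refine ⟨w, r, hle_wr, hnd2.2.2, ?_⟩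
          push_neg at h1 h2
          intro h3
          apply hnd2.2.2
          have e1 : φ w = - φ u := by linear_combination h1
          have e2 : φ r = - φ u := by linear_combination h2
          rw [e1, e2]
    obtain ⟨s, s', hss'le, hss', hsum⟩ := hpair
    have hsne : s ≠ s' := fun he => hss' (congrArg φ he)
    set E := (D.erase s).erase s' with hEdef
    have hDE : s ::ₘ s' ::ₘ E = D := pair_split hss'le hsne
    have hcardE : Multiset.card E = p - 4 := by
      have := congrArg Multiset.card hDE
      simp only [Multiset.card_cons] at this
      omega
    have hsD : s ∈ D := by rw [← hDE]; exact Multiset.mem_cons_self _ _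
    have hs'D : s' ∈ D := by
      rw [← hDE]; exact Multiset.mem_cons_of_mem (Multiset.mem_cons_self _ _)
    -- base of size 4
    have hbase4 : 4 ≤ ((SF (s ::ₘ ({s'} : Multiset (Gp p)))).image φ).card := by
      have hsub : ({0, φ s, φ s', φ s + φ s'} : Finset (ZMod p)) ⊆
          (SF (s ::ₘ ({s'} : Multiset (Gp p)))).image φ := by
        intro t ht
        simp only [Finset.mem_insert, Finset.mem_singleton] at ht
        rcases ht with rfl | rfl | rfl | rfl
        · exact Finset.mem_image.mpr ⟨0, zero_mem_SF _, map_zero φ⟩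
        · refine Finset.mem_image.mpr ⟨s, mem_SF.mpr ⟨{s}, ?_, Multiset.sum_singleton s⟩, rfl⟩
          exact Multiset.cons_le_cons s (Multiset.zero_le _)
        · exact Finset.mem_image.mpr ⟨s', mem_SF.mpr ⟨{s'}, Multiset.le_cons_self _ s,
            Multiset.sum_singleton s'⟩, rfl⟩
        · refine Finset.mem_image.mpr ⟨s + s', mem_SF.mpr ⟨s ::ₘ {s'}, le_refl _, by simp⟩, ?_⟩
          rw [AddMonoidHom.map_add]
      have h1 : φ s ≠ 0 := hφD s hsD
      have h2 : φ s' ≠ 0 := hφD s' hs'D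
      have hxy : φ s ≠ φ s + φ s' := fun h => h2 (by linear_combination h.symm)
      have hyx : φ s' ≠ φ s + φ s' := fun h => h1 (by linear_combination h.symm)
      have hc4 : ({0, φ s, φ s', φ s + φ s'} : Finset (ZMod p)).card = 4 := by
        rw [Finset.card_insert_of_notMem (by
          simp only [Finset.mem_insert, Finset.mem_singleton]
          push_neg
          exact ⟨fun h => h1 h.symm, fun h => h2 h.symm, fun h => hsum h.symm⟩)]
        rw [Finset.card_insert_of_notMem (by
          simp only [Finset.mem_insert, Finset.mem_singleton]
          push_neg
          exact ⟨hss', hxy⟩)]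
        rw [Finset.card_insert_of_notMem (by
          simp only [Finset.mem_singleton]
          exact hyx)]
        rw [Finset.card_singleton]
      calc 4 = ({0, φ s, φ s', φ s + φ s'} : Finset (ZMod p)).card := hc4.symm
      _ ≤ _ := Finset.card_le_card hsub
    -- chain up to all of D
    have hDadd : (s ::ₘ ({s'} : Multiset (Gp p))) + E = D := by
      rw [Multiset.cons_add, Multiset.singleton_add]
      exact hDE
    have hcovD : ((SF D).image φ) = Finset.univ := by
      apply image_univ_of_card
      have hc := chain (p := p) Fact.out φ (s ::ₘ ({s'} : Multiset (Gp p))) E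
        (fun z hz => ordZ (hφD z (by
          rw [← hDE]
          exact Multiset.mem_cons_of_mem (Multiset.mem_cons_of_mem hz))))
      rw [hDadd] at hc
      omega
    -- every fiber has ≥ 3 elements
    have hfib3 : ∀ c : ZMod p, 3 ≤ ((SF A).filter (fun v => φ v = c)).card := by
      intro c
      have hmem : c - φ b ∈ (SF D).image φ := by rw [hcovD]; exact Finset.mem_univ _
      obtain ⟨v, hv, hveq⟩ := Finset.mem_image.mp hmem
      obtain ⟨T, hT, rfl⟩ := mem_SF.mp hv
      have hW2 : ({T.sum + b, T.sum + b'} : Finset (Gp p)).card = 2 := by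
        rw [Finset.card_insert_of_notMem (by simp [hbb']), Finset.card_singleton]
      have hfb := fiber_bound hleBA ha₁ hφa c ({T.sum + b, T.sum + b'} : Finset (Gp p))
        ⟨T.sum + b, by simp⟩ ?_
      · rw [hW2] at hfb; omega
      · intro y hy
        have hTb : b ::ₘ T ≤ B := by rw [← hBD]; exact le_cons_pair₁ hT
        have hTb' : b' ::ₘ T ≤ B := by rw [← hBD]; exact le_cons_pair₂ hT
        rcases Finset.mem_insert.mp hy with rfl | hy
        · refine ⟨⟨b ::ₘ T, hTb, by rw [Multiset.sum_cons]; abel⟩, ?_⟩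
          rw [AddMonoidHom.map_add, hveq]
          ring
        · rw [Finset.mem_singleton] at hy
          subst hy
          refine ⟨⟨b' ::ₘ T, hTb', by rw [Multiset.sum_cons]; abel⟩, ?_⟩
          rw [AddMonoidHom.map_add, hveq, ← hφbb']
          ring
    calc 3 * p = ∑ _c : ZMod p, 3 := by
          rw [Finset.sum_const, Finset.card_univ, ZMod.card, smul_eq_mul, mul_comm]
    _ ≤ ∑ c : ZMod p, ((SF A).filter (fun v => φ v = c)).card :=
          Finset.sum_le_sum (fun c _ => hfib3 c)
  · -- case (ii): a second duplicated pair inside D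
    have hcntD : ∀ a, Multiset.count a D ≤ 1 := fun a =>
      le_trans (Multiset.count_le_of_le a
        (le_trans (Multiset.erase_le _ _) (Multiset.erase_le _ _))) (hcntB a)
    obtain ⟨e, e', hee'le, hee', hφee'⟩ := dup_extract φ hcntD hnd
    set E := (D.erase e).erase e' with hEdef
    have hDE : e ::ₘ e' ::ₘ E = D := pair_split hee'le hee'
    have hcardE : Multiset.card E = p - 4 := by
      have := congrArg Multiset.card hDE
      simp only [Multiset.card_cons] at this
      omega
    have heD : e ∈ D := by rw [← hDE]; exact Multiset.mem_cons_self _ _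
    have hφE : ∀ z ∈ E, φ z ≠ 0 := by
      intro z hz
      apply hφD
      rw [← hDE]
      exact Multiset.mem_cons_of_mem (Multiset.mem_cons_of_mem hz)
    set Q2 := (SF D).image (fun v => φ v + φ b) with hQ2
    set Q3 := (SF E).image (fun v => φ v + (φ b + φ e)) with hQ3
    have hQ2card : p - 1 ≤ Q2.card := by
      have himg : Q2 = ((SF D).image φ).image (· + φ b) := by
        rw [hQ2, Finset.image_image]; rfl
      rw [himg, Finset.card_image_of_injective _ (add_left_injective (φ b))]
      have := chain0 (p := p) Fact.out φ D (fun z hz => ordZ (hφD z hz))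
      rw [hcardD] at this
      omega
    have hQ3card : p - 3 ≤ Q3.card := by
      have himg : Q3 = ((SF E).image φ).image (· + (φ b + φ e)) := by
        rw [hQ3, Finset.image_image]; rfl
      rw [himg, Finset.card_image_of_injective _ (add_left_injective (φ b + φ e))]
      have := chain0 (p := p) Fact.out φ E (fun z hz => ordZ (hφE z hz))
      rw [hcardE] at this
      omega
    -- fiber bounds
    have hfib2 : ∀ c : ZMod p, 2 ≤ ((SF A).filter (fun v => φ v = c)).card := by
      intro c
      obtain ⟨v, hv, hveq⟩ := hbase c
      have hfb := fiber_bound hleBA ha₁ hφa c ({v} : Finset (Gp p))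
        ⟨v, by simp⟩ (by
          intro y hy
          rw [Finset.mem_singleton] at hy
          subst hy
          exact ⟨hv, hveq⟩)
      rw [Finset.card_singleton] at hfb
      omega
    have hfibQ2 : ∀ c ∈ Q2, 3 ≤ ((SF A).filter (fun v => φ v = c)).card := by
      intro c hc
      obtain ⟨v, hv, hveq⟩ := Finset.mem_image.mp hc
      obtain ⟨T, hT, rfl⟩ := mem_SF.mp hv
      have hW2 : ({T.sum + b, T.sum + b'} : Finset (Gp p)).card = 2 := by
        rw [Finset.card_insert_of_notMem (by simp [hbb']), Finset.card_singleton]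
      have hfb := fiber_bound hleBA ha₁ hφa c ({T.sum + b, T.sum + b'} : Finset (Gp p))
        ⟨T.sum + b, by simp⟩ ?_
      · rw [hW2] at hfb; omega
      · intro y hy
        have hTb : b ::ₘ T ≤ B := by rw [← hBD]; exact le_cons_pair₁ hT
        have hTb' : b' ::ₘ T ≤ B := by rw [← hBD]; exact le_cons_pair₂ hT
        rcases Finset.mem_insert.mp hy with rfl | hy
        · refine ⟨⟨b ::ₘ T, hTb, by rw [Multiset.sum_cons]; abel⟩, ?_⟩
          rw [AddMonoidHom.map_add, ← hveq]
        · rw [Finset.mem_singleton] at hy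
          subst hy
          refine ⟨⟨b' ::ₘ T, hTb', by rw [Multiset.sum_cons]; abel⟩, ?_⟩
          rw [AddMonoidHom.map_add, ← hφbb', ← hveq]
    have hfibQ3 : ∀ c ∈ Q3, 4 ≤ ((SF A).filter (fun v => φ v = c)).card := by
      intro c hc
      obtain ⟨v, hv, hveq⟩ := Finset.mem_image.mp hc
      obtain ⟨T, hT, rfl⟩ := mem_SF.mp hv
      -- the four candidate elements
      have hdb : b' - b ≠ 0 := sub_ne_zero.mpr (Ne.symm hbb')
      have hde : e' - e ≠ 0 := sub_ne_zero.mpr (Ne.symm hee')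
      -- memberships
      have hTbe : (b ::ₘ e ::ₘ T).sum = T.sum + b + e := by
        rw [Multiset.sum_cons, Multiset.sum_cons]; abel
      have hTbe' : (b ::ₘ e' ::ₘ T).sum = T.sum + b + e' := by
        rw [Multiset.sum_cons, Multiset.sum_cons]; abel
      have hTb'e : (b' ::ₘ e ::ₘ T).sum = T.sum + b' + e := by
        rw [Multiset.sum_cons, Multiset.sum_cons]; abel
      have hTb'e' : (b' ::ₘ e' ::ₘ T).sum = T.sum + b' + e' := by
        rw [Multiset.sum_cons, Multiset.sum_cons]; abel
      have hle_be : b ::ₘ e ::ₘ T ≤ B := by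
        rw [← hBD]
        exact le_cons_pair₁ (by rw [← hDE]; exact le_cons_pair₁ hT)
      have hle_be' : b ::ₘ e' ::ₘ T ≤ B := by
        rw [← hBD]
        exact le_cons_pair₁ (by rw [← hDE]; exact le_cons_pair₂ hT)
      have hle_b'e : b' ::ₘ e ::ₘ T ≤ B := by
        rw [← hBD]
        exact le_cons_pair₂ (by rw [← hDE]; exact le_cons_pair₁ hT)
      have hle_b'e' : b' ::ₘ e' ::ₘ T ≤ B := by
        rw [← hBD]
        exact le_cons_pair₂ (by rw [← hDE]; exact le_cons_pair₂ hT)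
      have hmem_be : T.sum + b + e ∈ sumset B := ⟨b ::ₘ e ::ₘ T, hle_be, hTbe⟩
      have hmem_be' : T.sum + b + e' ∈ sumset B := ⟨b ::ₘ e' ::ₘ T, hle_be', hTbe'⟩
      have hmem_b'e : T.sum + b' + e ∈ sumset B := ⟨b' ::ₘ e ::ₘ T, hle_b'e, hTb'e⟩
      have hmem_b'e' : T.sum + b' + e' ∈ sumset B := ⟨b' ::ₘ e' ::ₘ T, hle_b'e', hTb'e'⟩
      have hφ_be : φ (T.sum + b + e) = c := by
        rw [AddMonoidHom.map_add, AddMonoidHom.map_add, ← hveq]; ring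
      have hφ_be' : φ (T.sum + b + e') = c := by
        rw [AddMonoidHom.map_add, AddMonoidHom.map_add, ← hφee', ← hveq]; ring
      have hφ_b'e : φ (T.sum + b' + e) = c := by
        rw [AddMonoidHom.map_add, AddMonoidHom.map_add, ← hφbb', ← hveq]; ring
      have hφ_b'e' : φ (T.sum + b' + e') = c := by
        rw [AddMonoidHom.map_add, AddMonoidHom.map_add, ← hφbb', ← hφee', ← hveq]; ring
      -- choose three distinct elements
      by_cases hcase : b' - b = e' - e
      · -- use T.sum+b+e, T.sum+b'+e, T.sum+b'+e'
        have h2db : T.sum + b + e ≠ T.sum + b' + e' := by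
          intro h
          have h2 : (2 : ℕ) • (b' - b) = 0 := by
            rw [two_nsmul]
            linear_combination hcase - h
          have hdvd := addOrderOf_dvd_of_nsmul_eq_zero h2
          rw [ordG hdb] at hdvd
          have := Nat.le_of_dvd (by norm_num) hdvd
          omega
        have hd1 : T.sum + b + e ≠ T.sum + b' + e := fun h => hbb' (by linear_combination h)
        have hd2 : T.sum + b' + e ≠ T.sum + b' + e' := fun h => hee' (by linear_combination h)
        have hW3 : ({T.sum + b + e, T.sum + b' + e, T.sum + b' + e'} : Finset (Gp p)).card = 3 :=
          card_three hd1 h2db hd2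
        have hfb := fiber_bound hleBA ha₁ hφa c
          ({T.sum + b + e, T.sum + b' + e, T.sum + b' + e'} : Finset (Gp p))
          ⟨T.sum + b + e, by simp⟩ ?_
        · rw [hW3] at hfb; omega
        · intro y hy
          simp only [Finset.mem_insert, Finset.mem_singleton] at hy
          rcases hy with rfl | rfl | rfl
          · exact ⟨hmem_be, hφ_be⟩
          · exact ⟨hmem_b'e, hφ_b'e⟩
          · exact ⟨hmem_b'e', hφ_b'e'⟩
      · -- use T.sum+b+e, T.sum+b'+e, T.sum+b+e'
        have hd1 : T.sum + b + e ≠ T.sum + b' + e := fun h => hbb' (by linear_combination h)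
        have hd2 : T.sum + b + e ≠ T.sum + b + e' := fun h => hee' (by linear_combination h)
        have hd3 : T.sum + b' + e ≠ T.sum + b + e' := fun h => hcase (by linear_combination h)
        have hW3 : ({T.sum + b + e, T.sum + b' + e, T.sum + b + e'} : Finset (Gp p)).card = 3 :=
          card_three hd1 hd2 hd3
        have hfb := fiber_bound hleBA ha₁ hφa c
          ({T.sum + b + e, T.sum + b' + e, T.sum + b + e'} : Finset (Gp p))
          ⟨T.sum + b + e, by simp⟩ ?_
        · rw [hW3] at hfb; omega
        · intro y hy
          simp only [Finset.mem_insert, Finset.mem_singleton] at hy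
          rcases hy with rfl | rfl | rfl
          · exact ⟨hmem_be, hφ_be⟩
          · exact ⟨hmem_b'e, hφ_b'e⟩
          · exact ⟨hmem_be', hφ_be'⟩
    -- combine
    have key : ∀ c : ZMod p,
        2 + (if c ∈ Q2 then 1 else 0) + (if c ∈ Q3 then 1 else 0)
          ≤ ((SF A).filter (fun v => φ v = c)).card := by
      intro c
      by_cases h3 : c ∈ Q3
      · have := hfibQ3 c h3
        by_cases h2 : c ∈ Q2 <;> simp [h2, h3] <;> omega
      · by_cases h2 : c ∈ Q2
        · have := hfibQ2 c h2
          simp [h2, h3]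
          omega
        · have := hfib2 c
          simp [h2, h3]
          omega
    have hsum2 : ∑ c : ZMod p, (if c ∈ Q2 then 1 else 0) = Q2.card := by
      rw [Finset.sum_ite_mem, Finset.univ_inter, Finset.sum_const, smul_eq_mul, mul_one]
    have hsum3 : ∑ c : ZMod p, (if c ∈ Q3 then 1 else 0) = Q3.card := by
      rw [Finset.sum_ite_mem, Finset.univ_inter, Finset.sum_const, smul_eq_mul, mul_one]
    calc 3 * p ≤ 2 * p + (p - 1) + (p - 3) := by omega
    _ ≤ 2 * p + Q2.card + Q3.card := by omega
    _ = ∑ c : ZMod p, (2 + (if c ∈ Q2 then 1 else 0) + (if c ∈ Q3 then 1 else 0)) := by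
        rw [Finset.sum_add_distrib, Finset.sum_add_distrib, hsum2, hsum3,
          Finset.sum_const, Finset.card_univ, ZMod.card, smul_eq_mul, mul_comm]
    _ ≤ ∑ c : ZMod p, ((SF A).filter (fun v => φ v = c)).card :=
        Finset.sum_le_sum (fun c _ => key c)
end Part5


theorem stmt_11 (p : ℕ) (hp : p.Prime) (hp5 : p ≥ 5)
    (A : Multiset (ZMod p × ZMod p)) (hA : ValidMS p A)
    (hcard : Multiset.card A = p + 1) :
    (sumset A).ncard ≥ 3 * p := by
  haveI : Fact p.Prime := ⟨hp⟩
  haveI : NeZero p := ⟨hp.pos.ne'⟩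
  rw [SF_card_eq]
  by_cases hm : ∃ x : ZMod p × ZMod p, x ≠ 0 ∧ 2 ≤ inCount A (AddSubgroup.zmultiples x)
  · obtain ⟨x, hx, h2⟩ := hm
    exact case_m2 hp5 A hA hcard x hx h2
  · push_neg at hm
    exact case_m1 hp5 A hA hcard (fun x hx => by have := hm x hx; omega)
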